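/- Let N be a positive integer with N odd, and let A ⊆ ZMod N with |A| = α N. Write f_A = 1_A - α for the balanced function of A. If |(1/N²) ∑_{x1-2x2+x3=0} 1_A(x1) 1_A(x2) 1_A(x3) - α³| ≥ δ, then there exists θ ∈ ZMod N with |(1/N) ∑_n f_A(n) e(2πi n θ / N)| ≥ δ/7. -/

import Mathlib

set_option maxHeartbeats 1000000

open Finset Complex

private lemma orth_aux {N : ℕ} [NeZero N] (t : ZMod N) :
    ∑ θ : ZMod N, ZMod.stdAddChar (t * θ) = if t = 0 then (N : ℂ) else 0 := by
  split_ifs with h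
  · simp only [h, zero_mul, AddChar.map_zero_eq_one, sum_const, card_univ, ZMod.card,
      nsmul_eq_mul, mul_one]
  · exact AddChar.sum_eq_zero_of_ne_one (ZMod.isPrimitive_stdAddChar N h)

private lemma conj_std {N : ℕ} [NeZero N] (x : ZMod N) :
    (starRingEnd ℂ) (ZMod.stdAddChar x) = ZMod.stdAddChar (-x) := by
  rw [ZMod.stdAddChar_apply, ZMod.stdAddChar_apply, AddChar.map_neg_eq_inv,
    ← Circle.coe_inv_eq_conj]

private lemma exp_eq_std {N : ℕ} [NeZero N] (n θ : ZMod N) :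
    Complex.exp (2 * Real.pi * Complex.I * (n.val : ℂ) * (θ.val : ℂ) / N) =
      ZMod.stdAddChar (n * θ) := by
  have h1 : (n * θ : ZMod N) = (((n.val * θ.val : ℕ) : ℤ) : ZMod N) := by
    push_cast [ZMod.natCast_zmod_val]; ring
  rw [h1, ZMod.stdAddChar_coe]
  congr 1
  push_cast
  ring

private lemma fourier_id {N : ℕ} [NeZero N] (f : ZMod N → ℂ)
    (c : ZMod N → ℂ) (hc : ∀ θ, c θ = ∑ n : ZMod N, f n * ZMod.stdAddChar (n*θ)) :
    ∑ θ : ZMod N, c θ * c θ * c (-(2*θ))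
      = (N:ℂ) * ∑ x : ZMod N, ∑ y : ZMod N, f x * f y * f (2*y - x) := by
  set ψ : AddChar (ZMod N) ℂ := ZMod.stdAddChar with hψ
  have expand : ∀ θ : ZMod N, c θ * c θ * c (-(2*θ))
      = ∑ a : ZMod N, ∑ b : ZMod N, ∑ d : ZMod N,
          f a * f b * f d * ψ ((d + b - 2*a) * θ) := by
    intro θ
    simp only [hc]
    simp only [Finset.sum_mul, Finset.mul_sum]
    refine Finset.sum_congr rfl fun a _ => ?_
    refine Finset.sum_congr rfl fun b _ => ?_
    refine Finset.sum_congr rfl fun d _ => ?_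
    rw [show (d + b - 2*a) * θ = d*θ + (b*θ + a*(-(2*θ))) by ring,
      AddChar.map_add_eq_mul, AddChar.map_add_eq_mul]
    ring
  rw [Finset.sum_congr rfl (fun θ _ => expand θ)]
  rw [Finset.sum_comm]
  have step2 : ∀ a : ZMod N,
      (∑ θ : ZMod N, ∑ b : ZMod N, ∑ d : ZMod N, f a * f b * f d * ψ ((d + b - 2*a) * θ))
      = ∑ d : ZMod N, (N:ℂ) * (f a * f (2*a - d) * f d) := by
    intro a
    rw [Finset.sum_comm]
    rw [show (∑ b : ZMod N, ∑ θ : ZMod N, ∑ d : ZMod N, f a * f b * f d * ψ ((d + b - 2*a) * θ))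
        = ∑ b : ZMod N, ∑ d : ZMod N, ∑ θ : ZMod N, f a * f b * f d * ψ ((d + b - 2*a) * θ) from
      Finset.sum_congr rfl fun b _ => Finset.sum_comm]
    rw [Finset.sum_comm]
    refine Finset.sum_congr rfl fun d _ => ?_
    have hcollapse : ∀ b : ZMod N,
        (∑ θ : ZMod N, f a * f b * f d * ψ ((d + b - 2*a) * θ))
        = if b = 2*a - d then (N:ℂ) * (f a * f b * f d) else 0 := by
      intro b
      rw [← Finset.mul_sum, orth_aux]
      have : (d + b - 2*a = 0) = (b = 2*a - d) := by
        apply propext; constructor <;> intro h <;> linear_combination h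
      simp only [this]
      split_ifs <;> ring
    rw [Finset.sum_congr rfl (fun b _ => hcollapse b), Finset.sum_ite_eq' univ (2*a - d)]
    simp
  rw [Finset.sum_congr rfl (fun a _ => step2 a), Finset.mul_sum, Finset.sum_comm]
  refine Finset.sum_congr rfl fun x _ => ?_
  rw [Finset.mul_sum]
  refine Finset.sum_congr rfl fun y _ => ?_
  ring

private lemma parseval_c {N : ℕ} [NeZero N] (f : ZMod N → ℂ) (c : ZMod N → ℂ)
    (hc : ∀ θ, c θ = ∑ n : ZMod N, f n * ZMod.stdAddChar (n*θ)) :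
    ∑ θ : ZMod N, c θ * (starRingEnd ℂ) (c θ)
      = (N:ℂ) * ∑ n : ZMod N, f n * (starRingEnd ℂ) (f n) := by
  have expand : ∀ θ : ZMod N, c θ * (starRingEnd ℂ) (c θ)
      = ∑ a : ZMod N, ∑ b : ZMod N, f b * (starRingEnd ℂ) (f a) *
          ZMod.stdAddChar ((b - a) * θ) := by
    intro θ
    simp only [hc, map_sum, map_mul, conj_std]
    simp only [Finset.sum_mul, Finset.mul_sum]
    refine Finset.sum_congr rfl fun a _ => ?_
    refine Finset.sum_congr rfl fun b _ => ?_
    rw [show (b - a) * θ = b*θ + -(a*θ) by ring, AddChar.map_add_eq_mul]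
    ring
  rw [Finset.sum_congr rfl (fun θ _ => expand θ), Finset.sum_comm]
  have step2 : ∀ a : ZMod N,
      (∑ θ : ZMod N, ∑ b : ZMod N, f b * (starRingEnd ℂ) (f a) *
        ZMod.stdAddChar ((b - a) * θ))
      = (N:ℂ) * (f a * (starRingEnd ℂ) (f a)) := by
    intro a
    rw [Finset.sum_comm]
    have hcollapse : ∀ b : ZMod N,
        (∑ θ : ZMod N, f b * (starRingEnd ℂ) (f a) * ZMod.stdAddChar ((b - a) * θ))
        = if b = a then (N:ℂ) * (f a * (starRingEnd ℂ) (f a)) else 0 := by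
      intro b
      rw [← Finset.mul_sum, orth_aux]
      have : (b - a = 0) = (b = a) := by
        apply propext; constructor <;> intro h <;> linear_combination h
      simp only [this]
      split_ifs with hba
      · rw [hba]; ring
      · ring
    rw [Finset.sum_congr rfl (fun b _ => hcollapse b), Finset.sum_ite_eq' univ a]
    simp
  rw [Finset.sum_congr rfl (fun a _ => step2 a), Finset.mul_sum]

theorem stmt_5 (N : ℕ) [NeZero N] (hodd : Odd N) (A : Finset (ZMod N)) (α δ : ℝ)
    (hα : α = (A.card : ℝ) / N)
    (h : δ ≤ |((N : ℝ) ^ 2)⁻¹ *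
      (∑ x ∈ Finset.univ.filter
          (fun x : ZMod N × ZMod N × ZMod N => x.1 - 2 * x.2.1 + x.2.2 = 0),
        (if x.1 ∈ A then (1 : ℝ) else 0) * (if x.2.1 ∈ A then (1 : ℝ) else 0) *
          (if x.2.2 ∈ A then (1 : ℝ) else 0)) - α ^ 3|) :
    ∃ θ : ZMod N, δ / 7 ≤ ‖(N : ℂ)⁻¹ *
      ∑ n : ZMod N, ((if n ∈ A then (1 : ℂ) else 0) - (α : ℂ)) *
        Complex.exp (2 * Real.pi * Complex.I * (n.val : ℂ) * (θ.val : ℂ) / N)‖ := by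
  classical
  have hNR : (0:ℝ) < N := Nat.cast_pos.2 (Nat.pos_of_ne_zero (NeZero.ne N))
  have h2 : IsUnit (2 : ZMod N) := by
    have := (ZMod.isUnit_iff_coprime 2 N).2 hodd.coprime_two_left
    simpa using this
  set fr : ZMod N → ℝ := fun n => (if n ∈ A then 1 else 0) - α with hfr
  have sum_fr : ∑ n : ZMod N, fr n = 0 := by
    simp only [hfr, Finset.sum_sub_distrib, Finset.sum_ite_mem, Finset.univ_inter,
      Finset.sum_const, nsmul_eq_mul, mul_one, Finset.card_univ, ZMod.card]
    rw [hα]; field_simp; ring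
  have hα0 : 0 ≤ α := hα ▸ div_nonneg (Nat.cast_nonneg _) hNR.le
  have hcard : (A.card : ℝ) ≤ N := by
    exact_mod_cast (Finset.card_le_univ A).trans_eq (by simp [ZMod.card])
  have hα1 : α ≤ 1 := by rw [hα, div_le_one hNR]; exact hcard
  have bij1 : ∀ x : ZMod N, Function.Bijective (fun y : ZMod N => 2*y - x) := by
    intro x
    refine Finite.injective_iff_bijective.1 ?_
    intro a b hab
    simp only [sub_left_inj] at hab
    exact h2.mul_left_cancel hab
  have e1 : ∀ x : ZMod N, ∑ y : ZMod N, fr (2*y - x) = 0 := fun x =>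
    (Fintype.sum_bijective _ (bij1 x) _ fr (fun y => rfl)).trans sum_fr
  have e2 : ∀ y : ZMod N, ∑ x : ZMod N, fr (2*y - x) = 0 := fun y =>
    (Fintype.sum_bijective _ (Equiv.subLeft (2*y)).bijective _ fr (fun x => rfl)).trans sum_fr
  -- Step 1: reindex the constrained sum
  have hreindex :
      (∑ x ∈ Finset.univ.filter
          (fun x : ZMod N × ZMod N × ZMod N => x.1 - 2 * x.2.1 + x.2.2 = 0),
        (if x.1 ∈ A then (1:ℝ) else 0) * (if x.2.1 ∈ A then (1:ℝ) else 0) *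
          (if x.2.2 ∈ A then (1:ℝ) else 0))
      = ∑ x : ZMod N, ∑ y : ZMod N, (fr x + α) * (fr y + α) * (fr (2*y - x) + α) := by
    have hind : ∀ n : ZMod N, (if n ∈ A then (1:ℝ) else 0) = fr n + α := fun n => by simp [hfr]
    rw [← Finset.sum_product']
    refine Finset.sum_nbij' (fun p : ZMod N × ZMod N × ZMod N => (p.1, p.2.1))
      (fun q : ZMod N × ZMod N => (q.1, q.2, 2*q.2 - q.1)) ?_ ?_ ?_ ?_ ?_
    · intro a _; simp
    · intro q _; simp only [Finset.mem_filter, Finset.mem_univ, true_and]; ring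
    · intro a ha
      simp only [Finset.mem_filter, Finset.mem_univ, true_and] at ha
      have h3 : 2 * a.2.1 - a.1 = a.2.2 := by linear_combination -ha
      simp [h3]
    · intro q _; rfl
    · intro a ha
      simp only [Finset.mem_filter, Finset.mem_univ, true_and] at ha
      have h3 : 2 * a.2.1 - a.1 = a.2.2 := by linear_combination -ha
      simp [hind, h3]
  -- Step 2: expansion and cancellation of lower-order terms
  set T : ℝ := ∑ x : ZMod N, ∑ y : ZMod N, fr x * fr y * fr (2*y - x) with hTdef
  have hexpand : ∑ x : ZMod N, ∑ y : ZMod N, (fr x + α) * (fr y + α) * (fr (2*y - x) + α)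
      = T + α^3 * (N:ℝ)^2 := by
    have inner : ∀ x : ZMod N, ∑ y : ZMod N, (fr x + α)*(fr y + α)*(fr (2*y-x)+α)
        = (∑ y : ZMod N, fr x * fr y * fr (2*y - x)) + α * (∑ y : ZMod N, fr y * fr (2*y - x))
          + (N:ℝ) * (α^2 * fr x) + (N:ℝ) * α^3 := by
      intro x
      have expand : ∀ y : ZMod N, (fr x + α)*(fr y + α)*(fr (2*y-x)+α)
          = fr x * fr y * fr (2*y-x) + (α * fr x) * fr y + (α * fr x) * fr (2*y-x)
            + α * (fr y * fr (2*y-x)) + α^2 * fr x + α^2 * fr y + α^2 * fr (2*y-x) + α^3 := by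
        intro y; ring
      rw [Finset.sum_congr rfl (fun y _ => expand y)]
      simp only [Finset.sum_add_distrib, ← Finset.mul_sum, sum_fr, e1, mul_zero, add_zero,
        zero_add, Finset.sum_const, Finset.card_univ, ZMod.card, nsmul_eq_mul]
      ring
    have h4 : ∑ x : ZMod N, ∑ y : ZMod N, fr y * fr (2*y - x) = 0 := by
      rw [Finset.sum_comm]
      refine Finset.sum_eq_zero fun y _ => ?_
      rw [← Finset.mul_sum, e2 y, mul_zero]
    rw [Finset.sum_congr rfl (fun x _ => inner x)]
    simp only [Finset.sum_add_distrib, ← Finset.mul_sum, h4, sum_fr, mul_zero, add_zero,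
      Finset.sum_const, Finset.card_univ, ZMod.card, nsmul_eq_mul]
    rw [hTdef]; ring
  -- deduce δ ≤ (N²)⁻¹ |T|
  have hT : δ ≤ ((N:ℝ)^2)⁻¹ * |T| := by
    rw [hreindex, hexpand] at h
    have heq : ((N:ℝ)^2)⁻¹ * (T + α^3*(N:ℝ)^2) - α^3 = ((N:ℝ)^2)⁻¹ * T := by
      field_simp
      ring
    rw [heq, abs_mul, _root_.abs_of_nonneg (by positivity : (0:ℝ) ≤ ((N:ℝ)^2)⁻¹)] at h
    exact h
  -- Step 3: Fourier side
  set f : ZMod N → ℂ := fun n => ((fr n : ℝ) : ℂ) with hfc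
  set c : ZMod N → ℂ := fun θ => ∑ n : ZMod N, f n * ZMod.stdAddChar (n*θ) with hcdef
  have hc : ∀ θ, c θ = ∑ n : ZMod N, f n * ZMod.stdAddChar (n*θ) := fun θ => rfl
  have hTF : ((T : ℝ) : ℂ) = ∑ x : ZMod N, ∑ y : ZMod N, f x * f y * f (2*y - x) := by
    rw [hTdef]; push_cast [hfc]; rfl
  -- maximizer
  obtain ⟨θ0, -, hθ0⟩ := Finset.exists_max_image (univ : Finset (ZMod N))
    (fun θ => ‖c θ‖) ⟨0, Finset.mem_univ 0⟩
  set M : ℝ := ‖c θ0‖ with hMdef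
  have hM0 : 0 ≤ M := norm_nonneg _
  -- Parseval bound
  have hfr1 : ∀ n : ZMod N, fr n ^ 2 ≤ 1 := by
    intro n
    have : |fr n| ≤ 1 := by
      rw [abs_le]; simp only [hfr]; split_ifs <;> constructor <;> linarith
    calc fr n ^ 2 = |fr n|^2 := (_root_.sq_abs _).symm
      _ ≤ 1^2 := pow_le_pow_left₀ (abs_nonneg _) this 2
      _ = 1 := one_pow 2
  have hpars : ∑ θ : ZMod N, ‖c θ‖^2 ≤ (N:ℝ)^2 := by
    have hps : (∑ θ : ZMod N, ‖c θ‖^2) = (N:ℝ) * ∑ n : ZMod N, fr n ^ 2 := by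
      have hp := parseval_c f c hc
      have l1 : ∀ θ : ZMod N, c θ * (starRingEnd ℂ) (c θ)
          = ((‖c θ‖^2 : ℝ) : ℂ) := fun θ => by
        rw [Complex.mul_conj]; norm_cast; rw [Complex.sq_norm]
      have l2 : ∀ n : ZMod N, f n * (starRingEnd ℂ) (f n) = ((fr n ^ 2 : ℝ) : ℂ) := fun n => by
        simp only [hfc, Complex.conj_ofReal]; push_cast; ring
      rw [Finset.sum_congr rfl (fun θ _ => l1 θ), Finset.sum_congr rfl (fun n _ => l2 n)] at hp
      exact_mod_cast hp
    have hsum2 : ∑ n : ZMod N, fr n ^ 2 ≤ (N:ℝ) := by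
      calc ∑ n : ZMod N, fr n ^ 2 ≤ ∑ _n : ZMod N, (1:ℝ) :=
            Finset.sum_le_sum fun n _ => hfr1 n
        _ = (N:ℝ) := by simp [ZMod.card]
    calc ∑ θ : ZMod N, ‖c θ‖^2 = (N:ℝ) * ∑ n : ZMod N, fr n ^ 2 := hps
      _ ≤ (N:ℝ) * (N:ℝ) := mul_le_mul_of_nonneg_left hsum2 hNR.le
      _ = (N:ℝ)^2 := by ring
  -- reindexing θ ↦ -(2θ)
  have bijneg : Function.Bijective (fun θ : ZMod N => -(2*θ)) := by
    refine Finite.injective_iff_bijective.1 ?_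
    intro a b hab
    simp only [neg_inj] at hab
    exact h2.mul_left_cancel hab
  have hrein : ∑ θ : ZMod N, ‖c (-(2*θ))‖^2 = ∑ θ : ZMod N, ‖c θ‖^2 :=
    Fintype.sum_bijective _ bijneg _ (fun u => ‖c u‖^2) (fun θ => rfl)
  -- main bound
  have key : (N:ℝ) * |T| ≤ M * (N:ℝ)^2 := by
    have habs : (N:ℝ) * |T| = ‖(N:ℂ) * ((T:ℝ):ℂ)‖ := by
      rw [norm_mul, Complex.norm_real, Real.norm_eq_abs, Complex.norm_natCast]
    rw [habs, hTF, ← fourier_id f c hc]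
    calc ‖∑ θ : ZMod N, c θ * c θ * c (-(2*θ))‖
        ≤ ∑ θ : ZMod N, ‖c θ * c θ * c (-(2*θ))‖ := norm_sum_le _ _
      _ = ∑ θ : ZMod N, ‖c θ‖ * ‖c θ‖ * ‖c (-(2*θ))‖ := by
          simp [map_mul]
      _ ≤ ∑ θ : ZMod N, M * ((‖c θ‖^2 + ‖c (-(2*θ))‖^2)/2) := by
          refine Finset.sum_le_sum fun θ _ => ?_
          have ha : ‖c θ‖ ≤ M := hθ0 θ (Finset.mem_univ θ)
          have ha0 : (0:ℝ) ≤ ‖c θ‖ := norm_nonneg _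
          have hb0 : (0:ℝ) ≤ ‖c (-(2*θ))‖ := norm_nonneg _
          nlinarith [mul_nonneg ha0 (sq_nonneg (‖c θ‖ - ‖c (-(2*θ))‖)),
            mul_le_mul_of_nonneg_right ha
              (by positivity : (0:ℝ) ≤ (‖c θ‖^2 + ‖c (-(2*θ))‖^2)/2)]
      _ = M * ((∑ θ : ZMod N, ‖c θ‖^2
            + ∑ θ : ZMod N, ‖c (-(2*θ))‖^2)/2) := by
          rw [← Finset.mul_sum, ← Finset.sum_div, Finset.sum_add_distrib]
      _ = M * (∑ θ : ZMod N, ‖c θ‖^2) := by rw [hrein]; ring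
      _ ≤ M * (N:ℝ)^2 := mul_le_mul_of_nonneg_left hpars hM0
  have hMN : δ ≤ M / N := by
    have h5 : |T| ≤ M * N := by
      have h6 : |T| * N ≤ (M * N) * N := by nlinarith [key]
      exact le_of_mul_le_mul_right h6 hNR
    calc δ ≤ ((N:ℝ)^2)⁻¹ * |T| := hT
      _ ≤ ((N:ℝ)^2)⁻¹ * (M * N) := mul_le_mul_of_nonneg_left h5 (by positivity)
      _ = M / N := by field_simp
  refine ⟨θ0, ?_⟩
  have hsum_eq : (∑ n : ZMod N, ((if n ∈ A then (1:ℂ) else 0) - (α:ℂ)) *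
      Complex.exp (2 * Real.pi * Complex.I * (n.val:ℂ) * (θ0.val:ℂ) / N)) = c θ0 := by
    rw [hc]
    refine Finset.sum_congr rfl fun n _ => ?_
    rw [exp_eq_std]
    congr 1
    show ((if n ∈ A then (1:ℂ) else 0) - (α:ℂ)) = f n
    simp only [hfc, hfr, Complex.ofReal_sub]
    split_ifs <;> simp
  have hgoal_eq : ‖(N:ℂ)⁻¹ *
      ∑ n : ZMod N, ((if n ∈ A then (1:ℂ) else 0) - (α:ℂ)) *
        Complex.exp (2 * Real.pi * Complex.I * (n.val:ℂ) * (θ0.val:ℂ) / N)‖ = M / N := by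
    rw [hsum_eq, norm_mul, norm_inv, Complex.norm_natCast, ← hMdef]
    rw [div_eq_inv_mul]
  rw [hgoal_eq]
  rcases le_or_gt δ 0 with hδ | hδ
  · have : (0:ℝ) ≤ M / N := div_nonneg hM0 hNR.le
    linarith
  · linarith [hMN]
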